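/- arXiv:1106.3414 — 3 statements merged into one kernel-verified Lean document; each statement's English description precedes it below -/
import Mathlib

section
/- Let f : ℝ → ℝ be C² and α : [0,2π] → ℝ be C². Suppose that for every C² function β : [0,2π] → ℝ with β(0)=β(2π)=0 satisfying ∫₀^{2π} sin(α(t)) β(t) dt = 0 and ∫₀^{2π} cos(α(t)) β(t) dt = 0, we have ∫₀^{2π} f''(α'(t)) α''(t) β(t) dt = 0. Then there exist constants C₁, C₂ ∈ ℝ such that f''(α'(t)) α''(t) = C₁ cos(α(t)) + C₂ sin(α(t)) for all t ∈ [0,2π]. -/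
open Real intervalIntegral Set MeasureTheory
open scoped ContDiff

/-- The submodule of smooth test functions supported in `Ioo 0 (2π)`. -/
def ELtest : Submodule ℝ (ℝ → ℝ) where
  carrier := {β | ContDiff ℝ ∞ β ∧ tsupport β ⊆ Set.Ioo 0 (2*π)}
  add_mem' := fun {a b} ha hb => ⟨ha.1.add hb.1,
    (tsupport_add a b).trans (Set.union_subset ha.2 hb.2)⟩
  zero_mem' := ⟨contDiff_const, by
    have : tsupport (0 : ℝ → ℝ) = ∅ := by simp [tsupport]
    simp [this]⟩
  smul_mem' := fun c x hx => ⟨contDiff_const.smul hx.1,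
    (closure_mono (Function.support_const_smul_subset c x)).trans hx.2⟩

lemma mem_ELtest {β : ℝ → ℝ} :
    β ∈ ELtest ↔ ContDiff ℝ ∞ β ∧ tsupport β ⊆ Set.Ioo 0 (2*π) := Iff.rfl

/-- Integration against a continuous kernel as a linear functional on test functions. -/
noncomputable def ELfunc (φ : ℝ → ℝ) (hφ : Continuous φ) : ELtest →ₗ[ℝ] ℝ where
  toFun := fun β => ∫ t in (0:ℝ)..(2*π), φ t * β.1 t
  map_add' := fun a b => by
    have ia : IntervalIntegrable (fun t => φ t * a.1 t) volume 0 (2*π) :=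
      (hφ.mul (mem_ELtest.mp a.2).1.continuous).intervalIntegrable _ _
    have ib : IntervalIntegrable (fun t => φ t * b.1 t) volume 0 (2*π) :=
      (hφ.mul (mem_ELtest.mp b.2).1.continuous).intervalIntegrable _ _
    simp only [Submodule.coe_add, Pi.add_apply, mul_add]
    exact intervalIntegral.integral_add ia ib
  map_smul' := fun c a => by
    simp only [Submodule.coe_smul, Pi.smul_apply, smul_eq_mul, RingHom.id_apply]
    rw [← intervalIntegral.integral_const_mul]
    congr 1; ext t; ring

theorem euler_lagrange_uniformization
    (f α : ℝ → ℝ) (hf : ContDiff ℝ 2 f) (hα : ContDiff ℝ 2 α)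
    (hcrit : ∀ β : ℝ → ℝ, ContDiff ℝ 2 β → β 0 = 0 → β (2*π) = 0 →
      (∫ t in (0:ℝ)..(2*π), Real.sin (α t) * β t) = 0 →
      (∫ t in (0:ℝ)..(2*π), Real.cos (α t) * β t) = 0 →
      (∫ t in (0:ℝ)..(2*π), deriv (deriv f) (deriv α t) * deriv (deriv α) t * β t) = 0) :
    ∃ C₁ C₂ : ℝ, ∀ t ∈ Set.Icc (0:ℝ) (2*π),
      deriv (deriv f) (deriv α t) * deriv (deriv α) t
        = C₁ * Real.cos (α t) + C₂ * Real.sin (α t) := by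
  have hπ : (0:ℝ) < 2*π := by positivity
  -- continuity facts
  have h2 : (2 : WithTop ℕ∞) = 1 + 1 := by norm_num
  have hf1 : ContDiff ℝ 1 (deriv f) := by
    rw [h2, contDiff_succ_iff_deriv] at hf
    exact hf.2.2
  have hα1 : ContDiff ℝ 1 (deriv α) := by
    rw [h2, contDiff_succ_iff_deriv] at hα
    exact hα.2.2
  have hcf'' : Continuous (deriv (deriv f)) := hf1.continuous_deriv le_rfl
  have hcα' : Continuous (deriv α) := hα1.continuous
  have hcα'' : Continuous (deriv (deriv α)) := hα1.continuous_deriv le_rfl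
  set g : ℝ → ℝ := fun t => deriv (deriv f) (deriv α t) * deriv (deriv α) t with hgdef
  have hcg : Continuous g := (hcf''.comp hcα').mul hcα''
  have hcs : Continuous (fun t => Real.sin (α t)) := Real.continuous_sin.comp hα.continuous
  have hcc : Continuous (fun t => Real.cos (α t)) := Real.continuous_cos.comp hα.continuous
  -- test functions vanish at points outside the open interval
  have hvanish : ∀ β : ELtest, ∀ x ∉ Set.Ioo 0 (2*π), β.1 x = 0 := by
    intro β x hx
    exact image_eq_zero_of_notMem_tsupport (fun hm => hx ((mem_ELtest.mp β.2).2 hm))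
  -- the three functionals
  set K : ELtest →ₗ[ℝ] ℝ := ELfunc g hcg with hK
  set Ls : ELtest →ₗ[ℝ] ℝ := ELfunc _ hcs with hLs
  set Lc : ELtest →ₗ[ℝ] ℝ := ELfunc _ hcc with hLc
  set L : Fin 2 → (ELtest →ₗ[ℝ] ℝ) := ![Ls, Lc] with hL
  have hker : ⨅ i, LinearMap.ker (L i) ≤ LinearMap.ker K := by
    intro β hβ
    simp only [Submodule.mem_iInf, LinearMap.mem_ker] at hβ ⊢
    have hs := hβ 0
    have hc := hβ 1
    simp only [hL, Matrix.cons_val_zero, Matrix.cons_val_one, Matrix.head_cons] at hs hc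
    exact hcrit β.1 ((mem_ELtest.mp β.2).1.of_le (by
      rw [show (2 : WithTop ℕ∞) = ((2:ℕ∞) : WithTop ℕ∞) from rfl]
      exact WithTop.coe_le_coe.mpr le_top))
      (hvanish β 0 (by simp)) (hvanish β (2*π) (by simp)) hs hc
  have hspan : K ∈ Submodule.span ℝ (Set.range L) := mem_span_of_iInf_ker_le_ker hker
  obtain ⟨c, hc⟩ := (Submodule.mem_span_range_iff_exists_fun ℝ).1 hspan
  -- the function h := g - c 0 * sin∘α - c 1 * cos∘α integrates to zero against tests
  set h : ℝ → ℝ := fun t => g t - c 0 * Real.sin (α t) - c 1 * Real.cos (α t) with hhdef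
  have hch : Continuous h :=
    (hcg.sub (continuous_const.mul hcs)).sub (continuous_const.mul hcc)
  have key : ∀ᵐ x ∂(volume : Measure ℝ), x ∈ Set.Ioo 0 (2*π) → h x = 0 := by
    apply (isOpen_Ioo : IsOpen (Set.Ioo 0 (2*π))).ae_eq_zero_of_integral_contDiff_smul_eq_zero
    · exact (hch.locallyIntegrable).locallyIntegrableOn _
    · intro β hβsm hβcs hβsupp
      have hβmem : β ∈ ELtest := ⟨hβsm, hβsupp⟩
      have heval := LinearMap.congr_fun hc (⟨β, hβmem⟩ : ELtest)
      simp only [LinearMap.coe_sum, Finset.sum_apply, LinearMap.add_apply,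
        LinearMap.smul_apply, smul_eq_mul,
        Fin.sum_univ_two, hL, Matrix.cons_val_zero, Matrix.cons_val_one,
        Matrix.head_cons] at heval
      have hβc : Continuous β := hβsm.continuous
      have hsI : IntervalIntegrable (fun t => Real.sin (α t) * β t) volume 0 (2*π) :=
        (hcs.mul hβc).intervalIntegrable _ _
      have hcI : IntervalIntegrable (fun t => Real.cos (α t) * β t) volume 0 (2*π) :=
        (hcc.mul hβc).intervalIntegrable _ _
      have hgI : IntervalIntegrable (fun t => g t * β t) volume 0 (2*π) :=
        (hcg.mul hβc).intervalIntegrable _ _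
      have h1 : (∫ x in Set.Ioc 0 (2*π), β x • h x) = ∫ x, β x • h x :=
        setIntegral_eq_integral_of_forall_compl_eq_zero (fun x hx => by
          rw [image_eq_zero_of_notMem_tsupport
            (fun hm => hx (Set.Ioo_subset_Ioc_self (hβsupp hm))), zero_smul])
      have hIoo : (∫ x, β x • h x ∂(volume : Measure ℝ))
          = ∫ t in (0:ℝ)..(2*π), β t * h t := by
        rw [← h1, intervalIntegral.integral_of_le hπ.le]
        simp_rw [smul_eq_mul]
      rw [hIoo]
      have expand : (∫ t in (0:ℝ)..(2*π), β t * h t)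
          = (∫ t in (0:ℝ)..(2*π), g t * β t)
            - c 0 * (∫ t in (0:ℝ)..(2*π), Real.sin (α t) * β t)
            - c 1 * (∫ t in (0:ℝ)..(2*π), Real.cos (α t) * β t) := by
        rw [← intervalIntegral.integral_const_mul (c 0),
          ← intervalIntegral.integral_const_mul (c 1),
          ← intervalIntegral.integral_sub hgI (hsI.const_mul (c 0)),
          ← intervalIntegral.integral_sub (hgI.sub (hsI.const_mul (c 0)))
            (hcI.const_mul (c 1))]
        congr 1; ext t; simp only [hhdef]; ring
      rw [expand]
      have hKβ : K (⟨β, hβmem⟩ : ELtest) = ∫ t in (0:ℝ)..(2*π), g t * β t := rfl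
      have hLsβ : Ls (⟨β, hβmem⟩ : ELtest)
          = ∫ t in (0:ℝ)..(2*π), Real.sin (α t) * β t := rfl
      have hLcβ : Lc (⟨β, hβmem⟩ : ELtest)
          = ∫ t in (0:ℝ)..(2*π), Real.cos (α t) * β t := rfl
      rw [hKβ, hLsβ, hLcβ] at heval
      linarith [heval]
  -- h vanishes on the open interval
  have hIoo0 : ∀ t ∈ Set.Ioo 0 (2*π), h t = 0 := by
    intro t ht
    by_contra hne
    have hopen : IsOpen ({x | h x ≠ 0} ∩ Set.Ioo 0 (2*π)) :=
      (isOpen_ne.preimage hch).inter isOpen_Ioo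
    have hpos : (0:ENNReal) < volume ({x | h x ≠ 0} ∩ Set.Ioo 0 (2*π)) :=
      hopen.measure_pos volume ⟨t, hne, ht⟩
    have hnull : volume ({x | h x ≠ 0} ∩ Set.Ioo 0 (2*π)) = 0 := by
      apply measure_mono_null (fun x hx => ?_) (ae_iff.1 key)
      simp only [Set.mem_setOf_eq]
      intro hcontra
      exact hx.1 (hcontra hx.2)
    rw [hnull] at hpos
    exact lt_irrefl _ hpos
  -- extend to the closed interval by continuity
  have hIcc : ∀ t ∈ Set.Icc 0 (2*π), h t = 0 := by
    have hcl : Set.EqOn h 0 (closure (Set.Ioo 0 (2*π))) :=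
      Set.EqOn.closure (fun x hx => hIoo0 x hx) hch continuous_const
    rw [closure_Ioo hπ.ne] at hcl
    exact fun t ht => hcl ht
  refine ⟨c 1, c 0, fun t ht => ?_⟩
  have hz := hIcc t ht
  simp only [hhdef, hgdef] at hz
  linarith [hz]
end

section
/- For f(x) = x², any critical point α of the constrained variational problem satisfies the pendulum equation: there exist constants C₁, C₂ with α''(t) = (C₁/2) cos(α(t)) + (C₂/2) sin(α(t)), and after a suitable shift α̃(t) = α(t) + φ₀ (rotation of the plane), there exists ω ≥ 0 such that α̃'' + ω² sin(α̃) = 0. -/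
open Real intervalIntegral Set

-- Fundamental lemma of calculus of variations, one-sided (positive value) version
lemma fund_pos (h : ℝ → ℝ) (hc : Continuous h)
    (H : ∀ β : ℝ → ℝ, ContDiff ℝ 2 β → β 0 = 0 → β (2*π) = 0 →
      (∫ t in (0:ℝ)..(2*π), h t * β t) = 0)
    {t₀ : ℝ} (ht₀ : t₀ ∈ Set.Ioo (0:ℝ) (2*π)) (hpos : 0 < h t₀) : False := by
  -- find r₀ > 0 with h > 0 on ball t₀ r₀
  have hopen : IsOpen {x | 0 < h x} := isOpen_lt continuous_const hc
  obtain ⟨r₀, hr₀pos, hball⟩ := Metric.isOpen_iff.mp hopen t₀ hpos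
  set r : ℝ := min r₀ (min t₀ (2*π - t₀)) with hr
  have hrpos : 0 < r := lt_min hr₀pos (lt_min ht₀.1 (by linarith [ht₀.2]))
  have hr_le : r ≤ r₀ := min_le_left _ _
  have hr_t0 : r ≤ t₀ := le_trans (min_le_right _ _) (min_le_left _ _)
  have hr_t2 : r ≤ 2*π - t₀ := le_trans (min_le_right _ _) (min_le_right _ _)
  set f : ContDiffBump t₀ := ⟨r/2, r, by linarith, by linarith⟩ with hf
  have hfc : Continuous f := f.continuous
  have hβ : ContDiff ℝ 2 (f : ℝ → ℝ) := f.contDiff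
  have hzero : ∀ x, f.rOut ≤ dist x t₀ → (f : ℝ → ℝ) x = 0 := fun x hx => f.zero_of_le_dist hx
  have hrOut : f.rOut = r := rfl
  have hβ0 : (f : ℝ → ℝ) 0 = 0 := by
    apply hzero; rw [hrOut, Real.dist_eq]; rw [abs_sub_comm, abs_of_nonneg (by linarith)]; linarith
  have hβ2 : (f : ℝ → ℝ) (2*π) = 0 := by
    apply hzero; rw [hrOut, Real.dist_eq, abs_of_nonneg (by linarith)]; linarith
  have hint := H f hβ hβ0 hβ2
  -- split integral
  have hi : ∀ a b : ℝ, IntervalIntegrable (fun t => h t * (f : ℝ → ℝ) t) MeasureTheory.volume a b :=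
    fun a b => (hc.mul hfc).intervalIntegrable a b
  have hsplit : (∫ t in (0:ℝ)..(2*π), h t * f t)
      = (∫ t in (0:ℝ)..(t₀-r), h t * f t) + (∫ t in (t₀-r)..(t₀+r), h t * f t)
        + (∫ t in (t₀+r)..(2*π), h t * f t) := by
    rw [intervalIntegral.integral_add_adjacent_intervals (hi 0 (t₀-r)) (hi (t₀-r) (t₀+r)),
      intervalIntegral.integral_add_adjacent_intervals (hi 0 (t₀+r)) (hi (t₀+r) (2*π))]
  have hleft : (∫ t in (0:ℝ)..(t₀-r), h t * f t) = 0 := by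
    rw [intervalIntegral.integral_congr (g := fun _ => 0)]
    · simp
    · intro x hx
      rw [Set.uIcc_of_le (by linarith)] at hx
      have : (f : ℝ → ℝ) x = 0 := by
        apply hzero; rw [hrOut, Real.dist_eq, abs_sub_comm, abs_of_nonneg (by linarith [hx.2])]
        linarith [hx.2]
      simp [this]
  have hright : (∫ t in (t₀+r)..(2*π), h t * f t) = 0 := by
    rw [intervalIntegral.integral_congr (g := fun _ => 0)]
    · simp
    · intro x hx
      rw [Set.uIcc_of_le (by linarith)] at hx
      have : (f : ℝ → ℝ) x = 0 := by
        apply hzero; rw [hrOut, Real.dist_eq, abs_of_nonneg (by linarith [hx.1])]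
        linarith [hx.1]
      simp [this]
  have hmid : 0 < (∫ t in (t₀-r)..(t₀+r), h t * f t) := by
    apply intervalIntegral_pos_of_pos_on (hi _ _)
    · intro x hx
      have hxball : x ∈ Metric.ball t₀ r := by
        rw [Metric.mem_ball, Real.dist_eq, abs_sub_lt_iff]
        constructor <;> [linarith [hx.2]; linarith [hx.1]]
      have h1 : 0 < h x := hball (Metric.ball_subset_ball hr_le hxball)
      have h2 : 0 < (f : ℝ → ℝ) x := f.pos_of_mem_ball (by rwa [hrOut])
      exact mul_pos h1 h2
    · linarith
  rw [hsplit, hleft, hright] at hint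
  linarith

-- Fundamental lemma, full version
lemma fund (h : ℝ → ℝ) (hc : Continuous h)
    (H : ∀ β : ℝ → ℝ, ContDiff ℝ 2 β → β 0 = 0 → β (2*π) = 0 →
      (∫ t in (0:ℝ)..(2*π), h t * β t) = 0) :
    ∀ t ∈ Set.Icc (0:ℝ) (2*π), h t = 0 := by
  have hIoo : ∀ t ∈ Set.Ioo (0:ℝ) (2*π), h t = 0 := by
    intro t ht
    by_contra hne
    rcases lt_or_gt_of_ne hne with hlt | hgt
    · apply fund_pos (fun x => -h x) hc.neg ?_ ht (by simpa using hlt)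
      intro β hβ h0 h2
      have := H β hβ h0 h2
      have : (∫ t in (0:ℝ)..(2*π), -(h t * β t)) = 0 := by
        rw [intervalIntegral.integral_neg, this, neg_zero]
      simpa [neg_mul] using this
    · exact fund_pos h hc H ht hgt
  intro t ht
  have hclos : Set.Icc (0:ℝ) (2*π) = closure (Set.Ioo (0:ℝ) (2*π)) := by
    rw [closure_Ioo (by positivity : (0:ℝ) ≠ 2*π) ]
  have : Set.EqOn h 0 (closure (Set.Ioo (0:ℝ) (2*π))) :=
    Set.EqOn.closure (fun x hx => hIoo x hx) hc continuous_const
  have := this (hclos ▸ ht)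
  simpa using this

section Main

noncomputable def Wsub : Submodule ℝ (ℝ → ℝ) where
  carrier := {β | ContDiff ℝ 2 β ∧ β 0 = 0 ∧ β (2*π) = 0}
  add_mem' := fun hx hy => ⟨hx.1.add hy.1, by simp [hx.2.1, hy.2.1], by simp [hx.2.2, hy.2.2]⟩
  zero_mem' := ⟨contDiff_const, rfl, rfl⟩
  smul_mem' := fun c x hx => ⟨contDiff_const.mul hx.1, by simp [hx.2.1], by simp [hx.2.2]⟩

noncomputable def Lmap (w : ℝ → ℝ) (hw : Continuous w) : Wsub →ₗ[ℝ] ℝ where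
  toFun := fun β => ∫ t in (0:ℝ)..(2*π), w t * β.1 t
  map_add' := fun β γ => by
    have hβ : Continuous β.1 := β.2.1.continuous
    have hγ : Continuous γ.1 := γ.2.1.continuous
    have : (∫ t in (0:ℝ)..(2*π), (w t * β.1 t + w t * γ.1 t))
        = (∫ t in (0:ℝ)..(2*π), w t * β.1 t) + ∫ t in (0:ℝ)..(2*π), w t * γ.1 t :=
      intervalIntegral.integral_add ((hw.mul hβ).intervalIntegrable _ _)
        ((hw.mul hγ).intervalIntegrable _ _)
    rw [← this]
    simp only [Submodule.coe_add, Pi.add_apply, mul_add]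
  map_smul' := fun c β => by
    simp only [Submodule.coe_smul, Pi.smul_apply, smul_eq_mul, RingHom.id_apply]
    rw [← intervalIntegral.integral_const_mul]
    congr 1; ext t; ring

end Main

set_option maxHeartbeats 1600000 in
theorem critical_point_pendulum_equation
    (α : ℝ → ℝ) (hα : ContDiff ℝ 2 α)
    (hcrit : ∀ β : ℝ → ℝ, ContDiff ℝ 2 β → β 0 = 0 → β (2*π) = 0 →
      (∫ t in (0:ℝ)..(2*π), Real.sin (α t) * β t) = 0 →
      (∫ t in (0:ℝ)..(2*π), Real.cos (α t) * β t) = 0 →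
      (∫ t in (0:ℝ)..(2*π), 2 * deriv (deriv α) t * β t) = 0) :
    (∃ C₁ C₂ : ℝ, ∀ t ∈ Set.Icc (0:ℝ) (2*π),
      deriv (deriv α) t = C₁ / 2 * Real.cos (α t) + C₂ / 2 * Real.sin (α t)) ∧
    (∃ φ₀ ω : ℝ, 0 ≤ ω ∧ ∀ t ∈ Set.Icc (0:ℝ) (2*π),
      deriv (deriv (fun s => α s + φ₀)) t + ω^2 * Real.sin (α t + φ₀) = 0) := by
  have hαc : Continuous α := hα.continuous
  have hdd : Continuous (deriv (deriv α)) := by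
    have h1 : ContDiff ℝ 1 (deriv α) := by
      have := (contDiff_succ_iff_deriv (n := 1)).mp (by exact_mod_cast hα)
      exact this.2.2
    exact contDiff_one_iff_deriv.mp h1 |>.2
  set s₁ : ℝ → ℝ := fun t => Real.sin (α t) with hs₁
  set s₂ : ℝ → ℝ := fun t => Real.cos (α t) with hs₂
  set g : ℝ → ℝ := fun t => 2 * deriv (deriv α) t with hg
  have hs₁c : Continuous s₁ := Real.continuous_sin.comp hαc
  have hs₂c : Continuous s₂ := Real.continuous_cos.comp hαc
  have hgc : Continuous g := continuous_const.mul hdd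
  set L : Fin 2 → (Wsub →ₗ[ℝ] ℝ) := ![Lmap s₁ hs₁c, Lmap s₂ hs₂c] with hL
  have hker : ⨅ i, LinearMap.ker (L i) ≤ LinearMap.ker (Lmap g hgc) := by
    intro β hβ
    simp only [Submodule.mem_iInf] at hβ
    have h0 := hβ 0
    have h1 := hβ 1
    simp only [hL, LinearMap.mem_ker, Matrix.cons_val_zero, Matrix.cons_val_one,
      Matrix.head_cons] at h0 h1
    exact hcrit β.1 β.2.1 β.2.2.1 β.2.2.2 h0 h1
  have hspan := mem_span_of_iInf_ker_le_ker hker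
  obtain ⟨c, hc⟩ := (Submodule.mem_span_range_iff_exists_fun ℝ).mp hspan
  -- hc : ∑ i, c i • L i = Lmap g hgc
  have hfun : ∀ β : ℝ → ℝ, ContDiff ℝ 2 β → β 0 = 0 → β (2*π) = 0 →
      (∫ t in (0:ℝ)..(2*π), (g t - c 0 * s₁ t - c 1 * s₂ t) * β t) = 0 := by
    intro β hβ h0 h2
    set B : Wsub := ⟨β, hβ, h0, h2⟩ with hB
    have hβc : Continuous β := hβ.continuous
    have hgi : IntervalIntegrable (fun t => g t * β t) MeasureTheory.volume 0 (2*π) :=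
      (hgc.mul hβc).intervalIntegrable _ _
    have h1i : IntervalIntegrable (fun t => c 0 * (s₁ t * β t)) MeasureTheory.volume 0 (2*π) :=
      (continuous_const.mul (hs₁c.mul hβc)).intervalIntegrable _ _
    have h2i : IntervalIntegrable (fun t => c 1 * (s₂ t * β t)) MeasureTheory.volume 0 (2*π) :=
      (continuous_const.mul (hs₂c.mul hβc)).intervalIntegrable _ _
    have key := LinearMap.congr_fun hc B
    simp only [LinearMap.coe_sum, Finset.sum_apply, LinearMap.add_apply, LinearMap.smul_apply, smul_eq_mul,
      Fin.sum_univ_two, hL, Matrix.cons_val_zero, Matrix.cons_val_one, Matrix.head_cons] at key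
    -- key : c 0 * Lmap s₁ B + c 1 * Lmap s₂ B = Lmap g B
    have hexp : (fun t => (g t - c 0 * s₁ t - c 1 * s₂ t) * β t)
        = fun t => g t * β t - c 0 * (s₁ t * β t) - c 1 * (s₂ t * β t) := by
      ext t; ring
    rw [hexp, intervalIntegral.integral_sub (hgi.sub h1i) h2i,
      intervalIntegral.integral_sub hgi h1i,
      intervalIntegral.integral_const_mul, intervalIntegral.integral_const_mul]
    have e1 : Lmap s₁ hs₁c B = ∫ t in (0:ℝ)..(2*π), s₁ t * β t := rfl
    have e2 : Lmap s₂ hs₂c B = ∫ t in (0:ℝ)..(2*π), s₂ t * β t := rfl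
    have e3 : Lmap g hgc B = ∫ t in (0:ℝ)..(2*π), g t * β t := rfl
    rw [e1, e2, e3] at key
    linarith
  have hzero := fund (fun t => g t - c 0 * s₁ t - c 1 * s₂ t)
    ((hgc.sub (continuous_const.mul hs₁c)).sub (continuous_const.mul hs₂c)) hfun
  set C₁ : ℝ := c 1 with hC₁
  set C₂ : ℝ := c 0 with hC₂
  have hmain : ∀ t ∈ Set.Icc (0:ℝ) (2*π),
      deriv (deriv α) t = C₁ / 2 * Real.cos (α t) + C₂ / 2 * Real.sin (α t) := by
    intro t ht
    have := hzero t ht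
    simp only [hg, hs₁, hs₂] at this
    rw [hC₁, hC₂]
    linarith
  refine ⟨⟨C₁, C₂, hmain⟩, ?_⟩
  -- rotation part
  set R : ℝ := Real.sqrt (C₁^2 + C₂^2) with hR
  have hRnn : 0 ≤ R := Real.sqrt_nonneg _
  have hddshift : deriv (deriv (fun s => α s + (0:ℝ))) = deriv (deriv α) := by
    have : (fun s => α s + (0:ℝ)) = α := by funext s; ring
    rw [this]
  by_cases hR0 : R = 0
  · -- C₁ = C₂ = 0
    have hsq : C₁^2 + C₂^2 = 0 := by
      have h := Real.sq_sqrt (show (0:ℝ) ≤ C₁^2 + C₂^2 by positivity)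
      rw [← hR, hR0] at h
      simpa using h.symm
    have hC1 : C₁ = 0 := by nlinarith [sq_nonneg C₁, sq_nonneg C₂]
    have hC2 : C₂ = 0 := by nlinarith [sq_nonneg C₁, sq_nonneg C₂]
    refine ⟨0, 0, le_refl _, fun t ht => ?_⟩
    have hd : deriv (deriv (fun s => α s + (0:ℝ))) t = deriv (deriv α) t := by
      rw [hddshift]
    rw [hd, hmain t ht, hC1, hC2]
    ring
  · have hRpos : 0 < R := lt_of_le_of_ne hRnn (Ne.symm hR0)
    set z : ℂ := Complex.mk (-C₂/R) (-C₁/R) with hz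
    have hR2 : R^2 = C₁^2 + C₂^2 := Real.sq_sqrt (by positivity)
    have habs : ‖z‖ = 1 := by
      rw [Complex.norm_def, Complex.normSq_mk]
      have e : -C₂ / R * (-C₂ / R) + -C₁ / R * (-C₁ / R) = (C₁^2 + C₂^2) / R^2 := by ring
      rw [e, ← hR2, div_self (pow_ne_zero 2 (ne_of_gt hRpos)), Real.sqrt_one]
    have hz0 : z ≠ 0 := by
      intro h
      rw [h] at habs
      simp at habs
    set φ₀ : ℝ := Complex.arg z with hφ
    have hcos : Real.cos φ₀ = -C₂/R := by
      rw [hφ, Complex.cos_arg hz0, habs, div_one]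
    have hsin : Real.sin φ₀ = -C₁/R := by
      rw [hφ, Complex.sin_arg, habs, div_one]
    refine ⟨φ₀, Real.sqrt (R/2), Real.sqrt_nonneg _, fun t ht => ?_⟩
    have hω2 : (Real.sqrt (R/2))^2 = R/2 := Real.sq_sqrt (by positivity)
    have hdshift : deriv (fun s => α s + φ₀) = deriv α := by
      funext s
      exact deriv_add_const _
    have hd : deriv (deriv (fun s => α s + φ₀)) t = deriv (deriv α) t := by
      rw [hdshift]
    rw [hd, hmain t ht, hω2, Real.sin_add]
    have h1 : Real.cos φ₀ * R = -C₂ := by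
      rw [hcos]; field_simp
    have h2 : Real.sin φ₀ * R = -C₁ := by
      rw [hsin]; field_simp
    linear_combination (Real.sin (α t) / 2) * h1 + (Real.cos (α t) / 2) * h2
end

section
/- Let α : [0,2π] → ℝ be C² with α'' + ω² sin α = 0 for ω > 0, and suppose α'(2π) = -α'(0) with α'(0) ≠ 0. Then ∫₀^{2π} sin(α(t)) dt = 2α'(0)/ω² ≠ 0, so the associated curve is not closed. -/
open Real intervalIntegral Set

theorem pendulum_sin_integral_nonzero
    (α : ℝ → ℝ) (ω : ℝ) (hω : 0 < ω) (hα : ContDiff ℝ 2 α)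
    (hpend : ∀ t ∈ Set.Icc (0:ℝ) (2*π),
      deriv (deriv α) t + ω^2 * Real.sin (α t) = 0)
    (hvel : deriv α (2*π) = - deriv α 0) (hne : deriv α 0 ≠ 0) :
    (∫ t in (0:ℝ)..(2*π), Real.sin (α t)) = 2 * deriv α 0 / ω^2 ∧
    (∫ t in (0:ℝ)..(2*π), Real.sin (α t)) ≠ 0 := by
  have hπ : (0:ℝ) ≤ 2 * π := by positivity
  have hω2 : (ω:ℝ)^2 ≠ 0 := by positivity
  have hd1 : ContDiff ℝ 1 (deriv α) := (hα.iterate_deriv' 1 1).of_le le_rfl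
  have hdiff : ∀ t, HasDerivAt (deriv α) (deriv (deriv α) t) t := fun t =>
    (hd1.differentiable one_ne_zero t).hasDerivAt
  have hcont : Continuous (deriv (deriv α)) := (hd1.iterate_deriv' 0 1).continuous
  have hftc : (∫ t in (0:ℝ)..(2*π), deriv (deriv α) t)
      = deriv α (2*π) - deriv α 0 :=
    intervalIntegral.integral_deriv_eq_sub (fun t _ => hd1.differentiable one_ne_zero t)
      (hcont.intervalIntegrable _ _)
  have hcongr : (∫ t in (0:ℝ)..(2*π), Real.sin (α t))
      = ∫ t in (0:ℝ)..(2*π), (-(1/ω^2)) * deriv (deriv α) t := by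
    apply intervalIntegral.integral_congr
    intro t ht
    rw [Set.uIcc_of_le hπ] at ht
    have := hpend t ht
    field_simp
    linarith
  have hval : (∫ t in (0:ℝ)..(2*π), Real.sin (α t)) = 2 * deriv α 0 / ω^2 := by
    rw [hcongr, intervalIntegral.integral_const_mul, hftc, hvel]
    field_simp
    ring
  refine ⟨hval, ?_⟩
  rw [hval]
  intro h
  apply hne
  field_simp at h
  linarith
end
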